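/- Let (𝒳, ≥_*, π) be a market with π ∈ Π₀(𝒳). Then the set M₀(π) of pricing measures is non-empty. -/

import Mathlib

open Set Filter

/-- A reflexive and transitive binary relation `≥_*` on real valued functions on `Ω`
satisfying the rationality axioms (i)-(iii) of the paper. -/
structure Rationality (Ω : Type*) where
  ge : (Ω → ℝ) → (Ω → ℝ) → Prop
  refl : ∀ f, ge f f
  trans : ∀ f g h, ge f g → ge g h → ge f h
  /-- axiom (i), first part : `1 >_* 0`. -/
  one_gt_zero : ge 1 0 ∧ ¬ ge 0 1
  /-- axiom (i), second part : pointwise domination implies `≥_*`. -/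
  ge_of_le : ∀ f g : Ω → ℝ, (∀ ω, g ω ≤ f ω) → ge f g
  /-- axiom (ii) : `f ≥_* g` implies `b f + h ≥_* b g + h` for bounded `b ≥ 0`. -/
  affine : ∀ f g b h : Ω → ℝ, ge f g → (∀ ω, 0 ≤ b ω) → (∃ c : ℝ, ∀ ω, b ω ≤ c) →
    ge (fun ω => b ω * f ω + h ω) (fun ω => b ω * g ω + h ω)
  /-- axiom (iii) : `f >_* 0` implies `f ∧ 1 >_* 0`. -/
  trunc : ∀ f : Ω → ℝ, ge f 0 → ¬ ge 0 f →
    ge (fun ω => min (f ω) 1) 0 ∧ ¬ ge 0 (fun ω => min (f ω) 1)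

/-- The asymmetric (strict) part `>_*` of `≥_*`. -/
def Rationality.gt {Ω : Type*} (R : Rationality Ω) (f g : Ω → ℝ) : Prop :=
  R.ge f g ∧ ¬ R.ge g f

/-- A set `A ⊆ Ω` is negligible when `0 ≥_* 1_A`. -/
def Rationality.Negligible {Ω : Type*} (R : Rationality Ω) (A : Set Ω) : Prop :=
  R.ge 0 (A.indicator fun _ => (1 : ℝ))

/-- `𝒳` is a market : a convex set of functions containing `0` and `1`, whose elements are
`≥_*`-bounded below by constants and which is stable under addition of nonnegative constants. -/
structure IsMarket {Ω : Type*} (R : Rationality Ω) (X : Set (Ω → ℝ)) : Prop where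
  convex : ∀ f ∈ X, ∀ g ∈ X, ∀ t : ℝ, 0 ≤ t → t ≤ 1 →
    (fun ω => t * f ω + (1 - t) * g ω) ∈ X
  zero_mem : (0 : Ω → ℝ) ∈ X
  one_mem : (1 : Ω → ℝ) ∈ X
  bddBelow : ∀ f ∈ X, ∃ a : ℝ, R.ge f (fun _ => a)
  add_nonneg_const : ∀ f ∈ X, ∀ lam : ℝ, 0 ≤ lam → (fun ω => f ω + lam) ∈ X

/-- `π ∈ Π₀(𝒳)` : positively homogeneous, subadditive, normalized and `≥_*`-monotone on `X`. -/
structure IsPriceFun0 {Ω : Type*} (R : Rationality Ω) (X : Set (Ω → ℝ))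
    (π : (Ω → ℝ) → ℝ) : Prop where
  posHom : ∀ f ∈ X, ∀ lam : ℝ, 0 < lam → (fun ω => lam * f ω) ∈ X →
    π (fun ω => lam * f ω) = lam * π f
  subadd : ∀ f ∈ X, ∀ g ∈ X, (fun ω => f ω + g ω) ∈ X →
    π (fun ω => f ω + g ω) ≤ π f + π g
  norm_one : π 1 = 1
  mono : ∀ f ∈ X, ∀ g ∈ X, R.ge f g → π g ≤ π f

/-- `π ∈ Π(𝒳)` : a price function, i.e. an element of `Π₀(𝒳)` free of arbitrage. -/
structure IsPriceFun {Ω : Type*} (R : Rationality Ω) (X : Set (Ω → ℝ))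
    (π : (Ω → ℝ) → ℝ) extends IsPriceFun0 R X π : Prop where
  arbFree : ∀ f ∈ X, R.gt f 0 → 0 < π f

/-- Cash additivity of a price `π` on the set `X`. -/
def CashAdditive {Ω : Type*} (X : Set (Ω → ℝ)) (π : (Ω → ℝ) → ℝ) : Prop :=
  ∀ f ∈ X, ∀ a : ℝ, (fun ω => f ω + a) ∈ X → π (fun ω => f ω + a) = π f + a

/-- The cash additive part `π^a` of `π` : `π^a(f) = inf {π(f + t) - t : t ∈ ℝ, f + t ∈ X}`. -/
noncomputable def cashPart {Ω : Type*} (X : Set (Ω → ℝ)) (π : (Ω → ℝ) → ℝ)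
    (f : Ω → ℝ) : ℝ :=
  sInf {y | ∃ t : ℝ, (fun ω => f ω + t) ∈ X ∧ y = π (fun ω => f ω + t) - t}

/-- `L(𝒳)` : the superhedgeable claims `{g : λ X ≥_* |g| for some λ > 0, X ∈ 𝒳}`. -/
def Lspan {Ω : Type*} (R : Rationality Ω) (X : Set (Ω → ℝ)) : Set (Ω → ℝ) :=
  {g | ∃ lam : ℝ, 0 < lam ∧ ∃ f ∈ X, R.ge (fun ω => lam * f ω) (fun ω => |g ω|)}

/-- `𝒞(π) = {g : λ[X - π(X)] ≥_* g for some λ > 0, X ∈ 𝒳}`. -/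
def Cpi {Ω : Type*} (R : Rationality Ω) (X : Set (Ω → ℝ)) (π : (Ω → ℝ) → ℝ) :
    Set (Ω → ℝ) :=
  {g | ∃ lam : ℝ, 0 < lam ∧ ∃ f ∈ X, R.ge (fun ω => lam * (f ω - π f)) g}

/-- Closure in the topology of uniform distance on `𝔉(Ω)`. -/
def uClosure {Ω : Type*} (A : Set (Ω → ℝ)) : Set (Ω → ℝ) :=
  {g | ∀ ε : ℝ, 0 < ε → ∃ h ∈ A, ∀ ω, |g ω - h ω| ≤ ε}

/-- A finitely additive probability defined on the power set of `Ω`. -/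
structure FinAddProb (Ω : Type*) where
  meas : Set Ω → ℝ
  nonneg : ∀ A, 0 ≤ meas A
  total : meas Set.univ = 1
  additive : ∀ A B, Disjoint A B → meas (A ∪ B) = meas A + meas B

/-- Countable additivity of a finitely additive probability. -/
def FinAddProb.CountablyAdditive {Ω : Type*} (m : FinAddProb Ω) : Prop :=
  ∀ A : ℕ → Set Ω, (Pairwise fun i j => Disjoint (A i) (A j)) →
    HasSum (fun n => m.meas (A n)) (m.meas (⋃ n, A n))

/-- Upper tail `∫_0^∞ m(f > t) dt` (with values in `ℝ≥0∞`), used to define the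
finitely additive integral. -/
noncomputable def posTail {Ω : Type*} (m : FinAddProb Ω) (f : Ω → ℝ) : ENNReal :=
  ∫⁻ t in Set.Ioi (0 : ℝ), ENNReal.ofReal (m.meas {ω | t < f ω})

/-- `f ∈ L¹(m)` : both tail integrals are finite. -/
def MemL1 {Ω : Type*} (m : FinAddProb Ω) (f : Ω → ℝ) : Prop :=
  posTail m f ≠ ⊤ ∧ posTail m (fun ω => - f ω) ≠ ⊤

/-- The integral `∫ f dm` with respect to a finitely additive probability. -/
noncomputable def faIntegral {Ω : Type*} (m : FinAddProb Ω) (f : Ω → ℝ) : ℝ :=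
  (posTail m f).toReal - (posTail m (fun ω => - f ω)).toReal

/-- Closure of `A` with respect to the `L¹(m)` distance. -/
def L1Closure {Ω : Type*} (m : FinAddProb Ω) (A : Set (Ω → ℝ)) : Set (Ω → ℝ) :=
  {g | ∀ ε : ℝ, 0 < ε → ∃ h ∈ A, MemL1 m (fun ω => g ω - h ω) ∧
    faIntegral m (fun ω => |g ω - h ω|) ≤ ε}

/-- The set `M₀(π)` of pricing measures. -/
def M0 {Ω : Type*} (R : Rationality Ω) (X : Set (Ω → ℝ)) (π : (Ω → ℝ) → ℝ) :
    Set (FinAddProb Ω) :=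
  {m | (∀ g ∈ Lspan R X, MemL1 m g) ∧ ∀ f ∈ X, faIntegral m f ≤ π f}

/-- The set `M(π)` of strictly positive pricing measures :
those `m ∈ M₀(π)` with `∫ (f ∧ 1) dm > 0` whenever `f >_* 0`. -/
def Mstrict {Ω : Type*} (R : Rationality Ω) (X : Set (Ω → ℝ)) (π : (Ω → ℝ) → ℝ) :
    Set (FinAddProb Ω) :=
  {m | m ∈ M0 R X π ∧ ∀ f : Ω → ℝ, R.gt f 0 → 0 < faIntegral m (fun ω => min (f ω) 1)}

/-- The set `M(π; Y)` : elements of `M₀(π)` with `∫ (f ∧ 1) dm > 0` for `f ∈ Y`, `f >_* 0`. -/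
def MstrictOn {Ω : Type*} (R : Rationality Ω) (X : Set (Ω → ℝ)) (π : (Ω → ℝ) → ℝ)
    (Y : Set (Ω → ℝ)) : Set (FinAddProb Ω) :=
  {m | m ∈ M0 R X π ∧ ∀ f ∈ Y, R.gt f 0 → 0 < faIntegral m (fun ω => min (f ω) 1)}

/-- `𝒳₁ = {X ∧ k : X ∈ 𝒳, k ∈ ℝ₊ ∪ {+∞}}` (`k = +∞` yielding `X` itself). -/
def X1 {Ω : Type*} (X : Set (Ω → ℝ)) : Set (Ω → ℝ) :=
  {g | ∃ f ∈ X, g = f ∨ ∃ k : ℝ, 0 ≤ k ∧ g = fun ω => min (f ω) k}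

/-- The market power `𝓂(ρ)` : the supremum of
`[Σ ρ(fᵢ) - ρ(Σ fᵢ)] / Σ ρ(fᵢ)` over finite families of nonnegative bounded functions
(with the convention `0/0 = 0`, automatic in Lean). -/
noncomputable def marketPower {Ω : Type*} (ρ : (Ω → ℝ) → ℝ) : ℝ :=
  sSup {r | ∃ (N : ℕ) (f : Fin N → Ω → ℝ),
    (∀ i, ∀ ω, 0 ≤ f i ω) ∧ (∀ i, ∃ c : ℝ, ∀ ω, f i ω ≤ c) ∧
    r = ((∑ i, ρ (f i)) - ρ (fun ω => ∑ i, f i ω)) / (∑ i, ρ (f i))}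

/-- The relative market power `𝓂(ρ; Y)`, the supremum being restricted to finite families
of nonnegative bounded functions belonging to `Y`. -/
noncomputable def marketPowerOn {Ω : Type*} (Y : Set (Ω → ℝ)) (ρ : (Ω → ℝ) → ℝ) : ℝ :=
  sSup {r | ∃ (N : ℕ) (f : Fin N → Ω → ℝ), (∀ i, f i ∈ Y) ∧
    (∀ i, ∀ ω, 0 ≤ f i ω) ∧ (∀ i, ∃ c : ℝ, ∀ ω, f i ω ≤ c) ∧
    r = ((∑ i, ρ (f i)) - ρ (fun ω => ∑ i, f i ω)) / (∑ i, ρ (f i))}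

/-- A sequence of nonnegative bounded functions whose sum is bounded. -/
def GoodSeq {Ω : Type*} (f : ℕ → Ω → ℝ) : Prop :=
  (∀ n, ∀ ω, 0 ≤ f n ω) ∧ (∀ n, ∃ c : ℝ, ∀ ω, f n ω ≤ c) ∧
  (∃ c : ℝ, ∀ ω, ∀ k : ℕ, (∑ n ∈ Finset.range k, f n ω) ≤ c)

/-- The pointwise sum `Σₙ fₙ`. -/
noncomputable def seqSum {Ω : Type*} (f : ℕ → Ω → ℝ) : Ω → ℝ :=
  fun ω => ∑' n, f n ω

/-- The ratio `[Σ_{n ≤ k} ρ(fₙ) - ρ(Σₙ fₙ)] / Σ_{n ≤ k} ρ(fₙ)`. -/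
noncomputable def mcRatioSeq {Ω : Type*} (ρ : (Ω → ℝ) → ℝ) (f : ℕ → Ω → ℝ) (k : ℕ) : ℝ :=
  ((∑ n ∈ Finset.range (k + 1), ρ (f n)) - ρ (seqSum f)) /
    (∑ n ∈ Finset.range (k + 1), ρ (f n))

/-- `𝓂_c(ρ; f₁, f₂, …)` : the limit as `k → ∞` of the above ratios (as an extended real,
computed as a `limsup`, which coincides with the limit whenever the latter exists). -/
noncomputable def mcVal {Ω : Type*} (ρ : (Ω → ℝ) → ℝ) (f : ℕ → Ω → ℝ) : EReal :=
  Filter.limsup (fun k => ((mcRatioSeq ρ f k : ℝ) : EReal)) Filter.atTop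

/-- `𝓂_c(ρ)` : the supremum of `𝓂_c(ρ; f₁, f₂, …)` over all admissible sequences. -/
noncomputable def mcSup {Ω : Type*} (ρ : (Ω → ℝ) → ℝ) : EReal :=
  sSup {v | ∃ f : ℕ → Ω → ℝ, GoodSeq f ∧ v = mcVal ρ f}

/-- `𝓃_c(ρ)` : minus the infimum of `𝓂_c(ρ; f₁, f₂, …)` over all admissible sequences. -/
noncomputable def ncVal {Ω : Type*} (ρ : (Ω → ℝ) → ℝ) : EReal :=
  - sInf {v | ∃ f : ℕ → Ω → ℝ, GoodSeq f ∧ v = mcVal ρ f}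

/-- The set `B(Ω)` of bounded functions. -/
def BddFun (Ω : Type*) : Set (Ω → ℝ) :=
  {f | ∃ c : ℝ, ∀ ω, |f ω| ≤ c}

/-- `P` represents `≥_*` : `f ≥_* h` iff `inf_{ε > 0} P(f > h - ε) = 1`. -/
def Represents {Ω : Type*} (P : FinAddProb Ω) (R : Rationality Ω) : Prop :=
  ∀ f h : Ω → ℝ,
    R.ge f h ↔ sInf {x | ∃ ε : ℝ, 0 < ε ∧ x = P.meas {ω | h ω - ε < f ω}} = 1

/-- The robustness property (4d) : `f + ε >_* 0` for all `ε > 0` implies `f ≥_* 0`. -/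
def Robust {Ω : Type*} (R : Rationality Ω) : Prop :=
  ∀ f : Ω → ℝ, (∀ ε : ℝ, 0 < ε → R.gt (fun ω => f ω + ε) 0) → R.ge f 0

namespace M0Aux

variable {Ω : Type*}

lemma geOfEq (R : Rationality Ω) {u v u' v' : Ω → ℝ} (h : R.ge u v)
    (hu : u = u') (hv : v = v') : R.ge u' v' := hu ▸ hv ▸ h

lemma geAdd (R : Rationality Ω) {u v : Ω → ℝ} (h : R.ge u v) (w : Ω → ℝ) :
    R.ge (fun ω => u ω + w ω) (fun ω => v ω + w ω) := by
  have := R.affine u v (fun _ => 1) w h (fun _ => zero_le_one) ⟨1, fun _ => le_rfl⟩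
  simpa using this

lemma geSmul (R : Rationality Ω) {u v : Ω → ℝ} (h : R.ge u v) {c : ℝ} (hc : 0 ≤ c) :
    R.ge (fun ω => c * u ω) (fun ω => c * v ω) := by
  have := R.affine u v (fun _ => c) 0 h (fun _ => hc) ⟨c, fun _ => le_rfl⟩
  simpa using this

section Market

variable {R : Rationality Ω} {X : Set (Ω → ℝ)} {π : (Ω → ℝ) → ℝ}
variable (hM : IsMarket R X) (hπ : IsPriceFun0 R X π)

include hM in
lemma const_mem {c : ℝ} (hc : 0 ≤ c) : (fun _ : Ω => c) ∈ X := by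
  rcases le_or_gt c 1 with h | h
  · have := hM.convex 1 hM.one_mem 0 hM.zero_mem c hc h
    simpa using this
  · have := hM.add_nonneg_const 1 hM.one_mem (c - 1) (by linarith)
    have e : (fun ω => (1 : Ω → ℝ) ω + (c - 1)) = fun _ : Ω => c := by
      funext ω; simp
    rwa [e] at this

include hM hπ in
lemma pi_zero : π 0 = 0 := by
  have hmem : (fun ω => (2:ℝ) * (0 : Ω → ℝ) ω) ∈ X := by convert hM.zero_mem using 1; funext ω; simp
  have h := hπ.posHom 0 hM.zero_mem 2 two_pos hmem
  have e : (fun ω => (2:ℝ) * (0 : Ω → ℝ) ω) = (0 : Ω → ℝ) := by funext ω; simp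
  rw [e] at h; linarith

include hM hπ in
lemma pi_const {c : ℝ} (hc : 0 ≤ c) : π (fun _ : Ω => c) = c := by
  rcases eq_or_lt_of_le hc with h | h
  · have : (fun _ : Ω => c) = (0 : Ω → ℝ) := by funext ω; simp [← h]
    rw [this, pi_zero hM hπ]; exact h
  · have hmem : (fun ω => c * (1 : Ω → ℝ) ω) ∈ X := by
      have := const_mem hM hc
      simpa using this
    have h2 := hπ.posHom 1 hM.one_mem c h hmem
    have e : (fun ω => c * (1 : Ω → ℝ) ω) = (fun _ : Ω => c) := by funext ω; simp
    rw [e] at h2; rw [h2, hπ.norm_one, mul_one]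

include hM hπ in
lemma pi_add_const {f : Ω → ℝ} (hf : f ∈ X) {c : ℝ} (hc : 0 ≤ c) :
    π (fun ω => f ω + c) ≤ π f + c := by
  have hmem := hM.add_nonneg_const f hf c hc
  have h := hπ.subadd f hf (fun _ => c) (const_mem hM hc) hmem
  rwa [pi_const hM hπ hc] at h

include hM hπ in
lemma pi_lb {f : Ω → ℝ} (hf : f ∈ X) {d : ℝ} (hge : R.ge f (fun _ => d)) : d ≤ π f := by
  rcases le_or_gt 0 d with h | h
  · have := hπ.mono f hf (fun _ => d) (const_mem hM h) hge
    rwa [pi_const hM hπ h] at this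
  · set c := -d with hc
    have hc0 : (0:ℝ) ≤ c := by simp [hc]; linarith
    have hmem := hM.add_nonneg_const f hf c hc0
    have h1 : R.ge (fun ω => f ω + c) (fun ω => (fun _ : Ω => d) ω + c) :=
      geAdd R hge _
    have h2 : R.ge (fun ω => f ω + c) (0 : Ω → ℝ) := by
      refine geOfEq R h1 rfl ?_
      funext ω; simp [hc]
    have h3 := hπ.mono (fun ω => f ω + c) hmem 0 hM.zero_mem h2
    rw [pi_zero hM hπ] at h3
    have h4 := pi_add_const hM hπ hf hc0
    have : 0 ≤ π f + c := le_trans h3 h4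
    linarith

/-- The set of superhedging prices of `b`. -/
def Sset (R : Rationality Ω) (X : Set (Ω → ℝ)) (π : (Ω → ℝ) → ℝ) (b : Ω → ℝ) : Set ℝ :=
  {y | ∃ lam : ℝ, 0 < lam ∧ ∃ f ∈ X, ∃ s : ℝ,
    R.ge (fun ω => lam * f ω) (fun ω => b ω + s) ∧ y = lam * π f - s}

/-- The sublinear superhedging functional. -/
noncomputable def pFun (R : Rationality Ω) (X : Set (Ω → ℝ)) (π : (Ω → ℝ) → ℝ)
    (b : Ω → ℝ) : ℝ := sInf (Sset R X π b)

include hM hπ in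
lemma ub_mem_Sset {b : Ω → ℝ} {c : ℝ} (hub : ∀ ω, b ω ≤ c) : c ∈ Sset R X π b := by
  refine ⟨1, one_pos, (fun _ => max c 0), const_mem hM (le_max_right _ _), max c 0 - c, ?_, ?_⟩
  · apply R.ge_of_le
    intro ω
    have := hub ω
    simp only [one_mul]
    have := le_max_left c 0
    linarith
  · rw [pi_const hM hπ (le_max_right c 0)]; ring

include hM hπ in
lemma lb_le_Sset {b : Ω → ℝ} {d : ℝ} (hlb : ∀ ω, d ≤ b ω) :
    ∀ y ∈ Sset R X π b, d ≤ y := by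
  rintro y ⟨lam, hlam, f, hf, s, hge, rfl⟩
  have hinv : (0:ℝ) ≤ lam⁻¹ := by positivity
  have h1 : R.ge (fun ω => lam⁻¹ * (lam * f ω)) (fun ω => lam⁻¹ * (b ω + s)) :=
    geSmul R hge hinv
  have h2 : R.ge f (fun ω => lam⁻¹ * (b ω + s)) := by
    refine geOfEq R h1 ?_ rfl
    funext ω; field_simp
  have h3 : R.ge (fun ω => lam⁻¹ * (b ω + s)) (fun _ => lam⁻¹ * (d + s)) := by
    apply R.ge_of_le
    intro ω
    have := hlb ω
    have : d + s ≤ b ω + s := by linarith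
    exact mul_le_mul_of_nonneg_left this hinv
  have h4 : R.ge f (fun _ => lam⁻¹ * (d + s)) := R.trans _ _ _ h2 h3
  have h5 := pi_lb hM hπ hf h4
  have h6 : lam * (lam⁻¹ * (d + s)) ≤ lam * π f :=
    mul_le_mul_of_nonneg_left h5 hlam.le
  rw [mul_inv_cancel_left₀ (ne_of_gt hlam)] at h6
  linarith

include hM hπ in
lemma Sset_bddBelow {b : Ω → ℝ} {d : ℝ} (hlb : ∀ ω, d ≤ b ω) :
    BddBelow (Sset R X π b) := ⟨d, fun y hy => lb_le_Sset hM hπ hlb y hy⟩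

include hM hπ in
lemma pFun_le_of_mem {b : Ω → ℝ} {d : ℝ} (hlb : ∀ ω, d ≤ b ω) {y : ℝ}
    (hy : y ∈ Sset R X π b) : pFun R X π b ≤ y :=
  csInf_le (Sset_bddBelow hM hπ hlb) hy

include hM hπ in
lemma pFun_le {b : Ω → ℝ} {d c : ℝ} (hlb : ∀ ω, d ≤ b ω) (hub : ∀ ω, b ω ≤ c) :
    pFun R X π b ≤ c :=
  pFun_le_of_mem hM hπ hlb (ub_mem_Sset hM hπ hub)

include hM hπ in
lemma le_pFun {b : Ω → ℝ} {d c : ℝ} (hlb : ∀ ω, d ≤ b ω) (hub : ∀ ω, b ω ≤ c) :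
    d ≤ pFun R X π b :=
  le_csInf ⟨c, ub_mem_Sset hM hπ hub⟩ (lb_le_Sset hM hπ hlb)

end Market

end M0Aux
namespace M0Aux

variable {Ω : Type*}

section Sublinear

variable {R : Rationality Ω} {X : Set (Ω → ℝ)} {π : (Ω → ℝ) → ℝ}
variable (hM : IsMarket R X) (hπ : IsPriceFun0 R X π)

include hM hπ in
lemma pFun_add_le {b₁ b₂ : Ω → ℝ} {c₁ c₂ d₁ d₂ : ℝ}
    (hlb₁ : ∀ ω, d₁ ≤ b₁ ω) (hub₁ : ∀ ω, b₁ ω ≤ c₁)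
    (hlb₂ : ∀ ω, d₂ ≤ b₂ ω) (hub₂ : ∀ ω, b₂ ω ≤ c₂) :
    pFun R X π (fun ω => b₁ ω + b₂ ω) ≤ pFun R X π b₁ + pFun R X π b₂ := by
  refine le_of_forall_pos_le_add ?_
  intro ε hε
  have hne₁ : (Sset R X π b₁).Nonempty := ⟨c₁, ub_mem_Sset hM hπ hub₁⟩
  have hne₂ : (Sset R X π b₂).Nonempty := ⟨c₂, ub_mem_Sset hM hπ hub₂⟩
  obtain ⟨y₁, hy₁, hy₁'⟩ := Real.lt_sInf_add_pos hne₁ (half_pos hε)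
  obtain ⟨y₂, hy₂, hy₂'⟩ := Real.lt_sInf_add_pos hne₂ (half_pos hε)
  obtain ⟨l₁, hl₁, f₁, hf₁, s₁, hge₁, rfl⟩ := hy₁
  obtain ⟨l₂, hl₂, f₂, hf₂, s₂, hge₂, rfl⟩ := hy₂
  set lam := l₁ + l₂ with hlam
  have hlam0 : 0 < lam := by positivity
  set t := l₁ / lam with ht
  have ht0 : 0 ≤ t := by positivity
  have ht1 : t ≤ 1 := by
    rw [ht, div_le_one hlam0]; linarith
  have h1t : 1 - t = l₂ / lam := by
    rw [ht]; field_simp; rw [hlam]; ring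
  have hF : (fun ω => t * f₁ ω + (1 - t) * f₂ ω) ∈ X :=
    hM.convex f₁ hf₁ f₂ hf₂ t ht0 ht1
  set F := fun ω => t * f₁ ω + (1 - t) * f₂ ω with hFdef
  -- the ≥* witness
  have step1 := geAdd R hge₁ (fun ω => l₂ * f₂ ω)
  have step2 := geAdd R hge₂ (fun ω => b₁ ω + s₁)
  have step2' : R.ge (fun ω => b₁ ω + s₁ + l₂ * f₂ ω)
      (fun ω => (b₁ ω + b₂ ω) + (s₁ + s₂)) := by
    refine geOfEq R step2 ?_ ?_ <;> (funext ω; ring)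
  have hgeF : R.ge (fun ω => lam * F ω) (fun ω => (b₁ ω + b₂ ω) + (s₁ + s₂)) := by
    refine R.trans _ _ _ (geOfEq R step1 ?_ rfl) step2'
    funext ω
    show l₁ * f₁ ω + l₂ * f₂ ω = lam * (t * f₁ ω + (1 - t) * f₂ ω)
    rw [h1t, ht]
    field_simp
    try ring
  -- price bound
  have m1 : (fun ω => t * f₁ ω) ∈ X := by
    have := hM.convex f₁ hf₁ 0 hM.zero_mem t ht0 ht1
    simpa using this
  have m2 : (fun ω => (1 - t) * f₂ ω) ∈ X := by
    have := hM.convex f₂ hf₂ 0 hM.zero_mem (1 - t) (by linarith) (by linarith)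
    simpa using this
  have hπF : π F ≤ t * π f₁ + (1 - t) * π f₂ := by
    rcases eq_or_lt_of_le ht0 with h0 | h0
    · have e : F = fun ω => (1 - t) * f₂ ω := by
        funext ω; rw [hFdef]; simp [← h0]
      rcases eq_or_lt_of_le ht1 with h1 | h1
      · exfalso; rw [← h0] at h1; norm_num at h1
      · have := hπ.posHom f₂ hf₂ (1 - t) (by linarith) m2
        rw [e, this, ← h0]; simp
    · rcases eq_or_lt_of_le ht1 with h1 | h1
      · have e : F = fun ω => t * f₁ ω := by
          funext ω; rw [hFdef]; simp [h1]
        have := hπ.posHom f₁ hf₁ t h0 m1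
        rw [e, this, h1]; simp
      · have hsum := hπ.subadd (fun ω => t * f₁ ω) m1 (fun ω => (1 - t) * f₂ ω) m2 hF
        have e1 := hπ.posHom f₁ hf₁ t h0 m1
        have e2 := hπ.posHom f₂ hf₂ (1 - t) (by linarith) m2
        calc π F ≤ π (fun ω => t * f₁ ω) + π (fun ω => (1 - t) * f₂ ω) := hsum
          _ = t * π f₁ + (1 - t) * π f₂ := by rw [e1, e2]
  have hmem : lam * π F - (s₁ + s₂) ∈ Sset R X π (fun ω => b₁ ω + b₂ ω) :=
    ⟨lam, hlam0, F, hF, s₁ + s₂, hgeF, rfl⟩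
  have hle := pFun_le_of_mem hM hπ (b := fun ω => b₁ ω + b₂ ω) (d := d₁ + d₂)
    (fun ω => add_le_add (hlb₁ ω) (hlb₂ ω)) hmem
  have hval : lam * π F - (s₁ + s₂) ≤ (l₁ * π f₁ - s₁) + (l₂ * π f₂ - s₂) := by
    have : lam * π F ≤ lam * (t * π f₁ + (1 - t) * π f₂) :=
      mul_le_mul_of_nonneg_left hπF hlam0.le
    have e : lam * (t * π f₁ + (1 - t) * π f₂) = l₁ * π f₁ + l₂ * π f₂ := by
      rw [h1t, ht]; field_simp; try ring
    rw [e] at this; linarith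
  have : pFun R X π (fun ω => b₁ ω + b₂ ω) ≤ (l₁ * π f₁ - s₁) + (l₂ * π f₂ - s₂) :=
    le_trans hle hval
  have hlt : (l₁ * π f₁ - s₁) + (l₂ * π f₂ - s₂) <
      pFun R X π b₁ + pFun R X π b₂ + ε := by
    rw [pFun, pFun]; linarith
  exact le_of_lt (lt_of_le_of_lt this hlt)

include hM hπ in
lemma pFun_smul_le {b : Ω → ℝ} {c₁ d₁ : ℝ}
    (hlb : ∀ ω, d₁ ≤ b ω) (hub : ∀ ω, b ω ≤ c₁) {c : ℝ} (hc : 0 < c) :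
    pFun R X π (fun ω => c * b ω) ≤ c * pFun R X π b := by
  refine le_of_forall_pos_le_add ?_
  intro ε hε
  have hne : (Sset R X π b).Nonempty := ⟨c₁, ub_mem_Sset hM hπ hub⟩
  obtain ⟨y, hy, hy'⟩ := Real.lt_sInf_add_pos hne (div_pos hε hc)
  obtain ⟨l, hl, f, hf, s, hge, rfl⟩ := hy
  have hge' : R.ge (fun ω => (c * l) * f ω) (fun ω => c * b ω + c * s) := by
    refine geOfEq R (geSmul R hge hc.le) ?_ ?_ <;> (funext ω; ring)
  have hmem : (c * l) * π f - c * s ∈ Sset R X π (fun ω => c * b ω) :=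
    ⟨c * l, by positivity, f, hf, c * s, hge', rfl⟩
  have hle := pFun_le_of_mem hM hπ (b := fun ω => c * b ω) (d := c * d₁)
    (fun ω => mul_le_mul_of_nonneg_left (hlb ω) hc.le) hmem
  calc pFun R X π (fun ω => c * b ω) ≤ (c * l) * π f - c * s := hle
    _ = c * (l * π f - s) := by ring
    _ ≤ c * (sInf (Sset R X π b) + ε / c) := by
        exact mul_le_mul_of_nonneg_left hy'.le hc.le
    _ = c * pFun R X π b + ε := by
        have hcc : c * (ε / c) = ε := by field_simp
        rw [pFun, mul_add, hcc]

include hM hπ in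
lemma pFun_smul {b : Ω → ℝ} {c₁ d₁ : ℝ}
    (hlb : ∀ ω, d₁ ≤ b ω) (hub : ∀ ω, b ω ≤ c₁) {c : ℝ} (hc : 0 < c) :
    pFun R X π (fun ω => c * b ω) = c * pFun R X π b := by
  refine le_antisymm (pFun_smul_le hM hπ hlb hub hc) ?_
  have h2 : pFun R X π (fun ω => c⁻¹ * (c * b ω)) ≤ c⁻¹ * pFun R X π (fun ω => c * b ω) := by
    refine pFun_smul_le hM hπ (d₁ := c * d₁) (c₁ := c * c₁) ?_ ?_ (inv_pos.mpr hc)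
    · exact fun ω => mul_le_mul_of_nonneg_left (hlb ω) hc.le
    · exact fun ω => mul_le_mul_of_nonneg_left (hub ω) hc.le
  have e : (fun ω => c⁻¹ * (c * b ω)) = b := by
    funext ω; field_simp
  rw [e] at h2
  calc c * pFun R X π b ≤ c * (c⁻¹ * pFun R X π (fun ω => c * b ω)) :=
        mul_le_mul_of_nonneg_left h2 hc.le
    _ = pFun R X π (fun ω => c * b ω) := by field_simp

end Sublinear

end M0Aux
set_option linter.unusedSectionVars false

namespace M0Aux

variable {Ω : Type*}

section HB

variable [TopologicalSpace Ω] [DiscreteTopology Ω]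
variable {R : Rationality Ω} {X : Set (Ω → ℝ)} {π : (Ω → ℝ) → ℝ}
variable (hM : IsMarket R X) (hπ : IsPriceFun0 R X π)

/-- The indicator function of `A` as a bounded continuous function. -/
noncomputable def indB (A : Set Ω) : BoundedContinuousFunction Ω ℝ :=
  BoundedContinuousFunction.ofNormedAddCommGroup (A.indicator fun _ => 1)
    continuous_of_discreteTopology 1 (by
      intro ω; rw [Real.norm_eq_abs]
      by_cases h : ω ∈ A <;> simp [Set.indicator_apply, h])

lemma indB_apply (A : Set Ω) (ω : Ω) : indB A ω = A.indicator (fun _ => (1:ℝ)) ω := rfl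

lemma indB_nonneg (A : Set Ω) (ω : Ω) : 0 ≤ indB A ω := by
  rw [indB_apply]; by_cases h : ω ∈ A <;> simp [Set.indicator_apply, h]

lemma indB_le_one (A : Set Ω) (ω : Ω) : indB A ω ≤ 1 := by
  rw [indB_apply]; by_cases h : ω ∈ A <;> simp [Set.indicator_apply, h]

lemma coe_bound (b : BoundedContinuousFunction Ω ℝ) (ω : Ω) : -‖b‖ ≤ b ω ∧ b ω ≤ ‖b‖ :=
  abs_le.mp ((Real.norm_eq_abs _) ▸ b.norm_coe_le_norm ω)

include hM hπ in
lemma exists_phi : ∃ φ : BoundedContinuousFunction Ω ℝ →ₗ[ℝ] ℝ,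
    ∀ b : BoundedContinuousFunction Ω ℝ, φ b ≤ pFun R X π b := by
  obtain ⟨φ, -, hφ⟩ := exists_extension_of_le_sublinear
    ((0 : (BoundedContinuousFunction Ω ℝ) →ₗ[ℝ] ℝ).toPMap ⊥)
    (fun b => pFun R X π b)
    (fun c hc x => by
      show pFun R X π ⇑(c • x) = c * pFun R X π ⇑x
      have e : ⇑(c • x) = fun ω => c * x ω := by
        funext ω; simp
      rw [e]
      exact pFun_smul hM hπ (fun ω => (coe_bound x ω).1) (fun ω => (coe_bound x ω).2) hc)
    (fun x y => by
      show pFun R X π ⇑(x + y) ≤ pFun R X π ⇑x + pFun R X π ⇑y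
      have e : ⇑(x + y) = fun ω => x ω + y ω := by funext ω; simp
      rw [e]
      exact pFun_add_le hM hπ (fun ω => (coe_bound x ω).1) (fun ω => (coe_bound x ω).2)
        (fun ω => (coe_bound y ω).1) (fun ω => (coe_bound y ω).2))
    (fun x => by
      have hx : (x : BoundedContinuousFunction Ω ℝ) = 0 := (Submodule.mem_bot ℝ).mp x.2
      show (0 : BoundedContinuousFunction Ω ℝ →ₗ[ℝ] ℝ) (x : BoundedContinuousFunction Ω ℝ) ≤ _
      rw [LinearMap.zero_apply, hx]
      show (0:ℝ) ≤ pFun R X π ⇑(0 : BoundedContinuousFunction Ω ℝ)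
      have e : ⇑(0 : BoundedContinuousFunction Ω ℝ) = fun _ : Ω => (0:ℝ) := by
        funext ω; simp
      rw [e]
      exact le_pFun hM hπ (d := 0) (c := 0) (fun ω => le_rfl) (fun ω => le_rfl))
  exact ⟨φ, hφ⟩

variable {φ : BoundedContinuousFunction Ω ℝ →ₗ[ℝ] ℝ}
variable (hφ : ∀ b : BoundedContinuousFunction Ω ℝ, φ b ≤ pFun R X π b)

include hM hπ hφ in
lemma phi_nonpos {b : BoundedContinuousFunction Ω ℝ} (hb : ∀ ω, b ω ≤ 0) : φ b ≤ 0 :=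
  le_trans (hφ b) (pFun_le hM hπ (fun ω => (coe_bound b ω).1) hb)

include hM hπ hφ in
lemma phi_mono {b₁ b₂ : BoundedContinuousFunction Ω ℝ} (h : ∀ ω, b₁ ω ≤ b₂ ω) :
    φ b₁ ≤ φ b₂ := by
  have h1 : φ (b₁ - b₂) ≤ 0 := by
    refine phi_nonpos hM hπ hφ ?_
    intro ω
    have : (b₁ - b₂) ω = b₁ ω - b₂ ω := by simp
    rw [this]; linarith [h ω]
  rw [map_sub] at h1; linarith

include hM hπ hφ in
lemma phi_one : φ 1 = 1 := by
  have h1 : φ 1 ≤ 1 := by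
    refine le_trans (hφ 1) (pFun_le hM hπ (d := 1) ?_ ?_) <;>
      (intro ω; rw [BoundedContinuousFunction.coe_one]; simp)
  have h2 : φ (-1) ≤ -1 := by
    refine le_trans (hφ (-1)) (pFun_le hM hπ (d := -1) ?_ ?_) <;>
      (intro ω;
       have : (-1 : BoundedContinuousFunction Ω ℝ) ω = -1 := by simp
       rw [this])
  rw [map_neg] at h2
  linarith

include hM hπ hφ in
lemma phi_ind_nonneg (A : Set Ω) : 0 ≤ φ (indB A) := by
  have := phi_mono hM hπ hφ (b₁ := 0) (b₂ := indB A)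
    (fun ω => by simpa using indB_nonneg A ω)
  simpa using this

include hM hπ hφ in
lemma phi_ind_le_one (A : Set Ω) : φ (indB A) ≤ 1 := by
  have := phi_mono hM hπ hφ (b₁ := indB A) (b₂ := 1)
    (fun ω => by simpa using indB_le_one A ω)
  rwa [phi_one hM hπ hφ] at this

lemma indB_univ : indB (Set.univ : Set Ω) = 1 := by
  ext ω
  rw [indB_apply]
  simp

lemma indB_union {A B : Set Ω} (h : Disjoint A B) : indB (A ∪ B) = indB A + indB B := by
  ext ω
  rw [BoundedContinuousFunction.coe_add]
  show (A ∪ B).indicator (fun _ => (1:ℝ)) ω = indB A ω + indB B ω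
  rw [Set.indicator_union_of_disjoint h, indB_apply, indB_apply]

include hM hπ hφ in
/-- The finitely additive probability induced by `φ`. -/
noncomputable def mOf : FinAddProb Ω where
  meas A := φ (indB A)
  nonneg A := phi_ind_nonneg hM hπ hφ A
  total := by show φ (indB Set.univ) = 1; rw [indB_univ, phi_one hM hπ hφ]
  additive A B h := by
    show φ (indB (A ∪ B)) = φ (indB A) + φ (indB B)
    rw [indB_union h, map_add]

lemma mOf_meas (A : Set Ω) : (mOf hM hπ hφ).meas A = φ (indB A) := rfl

end HB

section FAP

lemma meas_mono (m : FinAddProb Ω) {A B : Set Ω} (h : A ⊆ B) : m.meas A ≤ m.meas B := by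
  have hadd := m.additive A (B \ A) Set.disjoint_sdiff_right
  rw [Set.union_diff_cancel h] at hadd
  linarith [m.nonneg (B \ A)]

lemma meas_le_one (m : FinAddProb Ω) (A : Set Ω) : m.meas A ≤ 1 := by
  have := meas_mono m (Set.subset_univ A)
  rwa [m.total] at this

end FAP

end M0Aux
namespace M0Aux

open MeasureTheory ENNReal

lemma setLIntegral_le_const'' {F : ℝ → ℝ≥0∞} {s : Set ℝ} (hs : MeasurableSet s)
    {c : ℝ≥0∞} (h : ∀ t ∈ s, F t ≤ c) :
    ∫⁻ t in s, F t ≤ c * volume s := by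
  rw [← lintegral_indicator hs]
  calc ∫⁻ t, s.indicator F t
      ≤ ∫⁻ t, s.indicator (fun _ => c) t := by
        apply lintegral_mono; intro t
        by_cases ht : t ∈ s
        · simpa [Set.indicator_of_mem ht] using h t ht
        · simp [Set.indicator_of_notMem ht]
    _ = c * volume s := by rw [lintegral_indicator hs, setLIntegral_const]

lemma const_le_setLIntegral'' {F : ℝ → ℝ≥0∞} {s : Set ℝ} (hs : MeasurableSet s)
    {c : ℝ≥0∞} (h : ∀ t ∈ s, c ≤ F t) :
    c * volume s ≤ ∫⁻ t in s, F t := by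
  rw [← lintegral_indicator hs]
  calc c * volume s = ∫⁻ t, s.indicator (fun _ => c) t := by
        rw [lintegral_indicator hs, setLIntegral_const]
    _ ≤ ∫⁻ t, s.indicator F t := by
        apply lintegral_mono; intro t
        by_cases ht : t ∈ s
        · simpa [Set.indicator_of_mem ht] using h t ht
        · simp [Set.indicator_of_notMem ht]

lemma setLIntegral_mono'' {F G : ℝ → ℝ≥0∞} {s : Set ℝ} (hs : MeasurableSet s)
    (h : ∀ t ∈ s, F t ≤ G t) :
    ∫⁻ t in s, F t ≤ ∫⁻ t in s, G t := by
  rw [← lintegral_indicator hs, ← lintegral_indicator hs]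
  apply lintegral_mono; intro t
  by_cases ht : t ∈ s
  · simpa [Set.indicator_of_mem ht] using h t ht
  · simp [Set.indicator_of_notMem ht]

variable {Ω : Type*}

lemma posTail_eq (m : FinAddProb Ω) (h : Ω → ℝ) :
    posTail m h = ∫⁻ t in Set.Ioi (0:ℝ), ENNReal.ofReal (m.meas {ω | t < h ω}) := rfl

lemma tail_le_tail (m : FinAddProb Ω) {h₁ h₂ : Ω → ℝ}
    (hsub : ∀ t, 0 < t → {ω | t < h₁ ω} ⊆ {ω | t < h₂ ω}) :
    posTail m h₁ ≤ posTail m h₂ := by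
  rw [posTail_eq, posTail_eq]
  exact setLIntegral_mono'' measurableSet_Ioi
    (fun t ht => ENNReal.ofReal_le_ofReal (meas_mono m (hsub t ht)))

lemma tail_le_of_null (m : FinAddProb Ω) (h : Ω → ℝ) {c : ℝ} (hc : 0 ≤ c)
    (hnull : ∀ t, c < t → m.meas {ω | t < h ω} = 0) :
    posTail m h ≤ ENNReal.ofReal c := by
  rw [posTail_eq, ← Set.Ioc_union_Ioi_eq_Ioi hc,
    Measure.restrict_union Set.Ioc_disjoint_Ioi_same measurableSet_Ioi,
    lintegral_add_measure]
  have h1 : ∫⁻ t in Set.Ioc (0:ℝ) c, ENNReal.ofReal (m.meas {ω | t < h ω})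
      ≤ 1 * volume (Set.Ioc (0:ℝ) c) := by
    refine setLIntegral_le_const'' measurableSet_Ioc (fun t _ => ?_)
    exact ENNReal.ofReal_le_one.mpr (meas_le_one m _)
  have h2 : ∫⁻ t in Set.Ioi c, ENNReal.ofReal (m.meas {ω | t < h ω})
      ≤ 0 * volume (Set.Ioi c) := by
    refine setLIntegral_le_const'' measurableSet_Ioi (fun t ht => ?_)
    rw [hnull t ht]; simp
  rw [Real.volume_Ioc] at h1
  calc _ ≤ 1 * ENNReal.ofReal (c - 0) + 0 * volume (Set.Ioi c) := add_le_add h1 h2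
    _ = ENNReal.ofReal c := by simp

lemma tail_le_tsum (m : FinAddProb Ω) (h : Ω → ℝ) {δ : ℝ} (hδ : 0 < δ) :
    posTail m h ≤ ∑' k : ℕ, ENNReal.ofReal (δ * m.meas {ω | (k:ℝ) * δ < h ω}) := by
  have cover : Set.Ioi (0:ℝ) = ⋃ k : ℕ, Set.Ioc ((k:ℝ) * δ) (((k:ℝ) + 1) * δ) := by
    ext t
    simp only [Set.mem_Ioi, Set.mem_iUnion, Set.mem_Ioc]
    constructor
    · intro ht
      have hpos : 0 < t / δ := div_pos ht hδ
      obtain hn := Nat.le_ceil (t / δ)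
      have hne : Nat.ceil (t / δ) ≠ 0 := by
        intro h0; rw [h0] at hn; norm_num at hn; linarith
      refine ⟨Nat.ceil (t / δ) - 1, ?_, ?_⟩
      · have h1 : ((Nat.ceil (t / δ) - 1 : ℕ) : ℝ) < t / δ := by
          have := Nat.ceil_lt_add_one (le_of_lt hpos)
          have hcast : ((Nat.ceil (t / δ) - 1 : ℕ) : ℝ) = (Nat.ceil (t / δ) : ℝ) - 1 := by
            have := Nat.one_le_iff_ne_zero.mpr hne
            push_cast [Nat.cast_sub this]
            ring
          rw [hcast]; linarith
        calc ((Nat.ceil (t / δ) - 1 : ℕ) : ℝ) * δ < (t / δ) * δ := by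
              exact mul_lt_mul_of_pos_right h1 hδ
          _ = t := by field_simp
      · have h2 : t / δ ≤ ((Nat.ceil (t / δ) - 1 : ℕ) : ℝ) + 1 := by
          have hcast : ((Nat.ceil (t / δ) - 1 : ℕ) : ℝ) = (Nat.ceil (t / δ) : ℝ) - 1 := by
            have := Nat.one_le_iff_ne_zero.mpr hne
            push_cast [Nat.cast_sub this]
            ring
          rw [hcast]; simpa using hn
        calc t = (t / δ) * δ := by field_simp
          _ ≤ (((Nat.ceil (t / δ) - 1 : ℕ) : ℝ) + 1) * δ := by
              exact mul_le_mul_of_nonneg_right h2 hδ.le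
    · rintro ⟨k, hk1, _⟩
      have : (0:ℝ) ≤ (k:ℝ) * δ := by positivity
      linarith
  rw [posTail_eq, cover]
  refine le_trans (lintegral_iUnion_le _ _) (ENNReal.tsum_le_tsum (fun k => ?_))
  have hbound : ∫⁻ t in Set.Ioc ((k:ℝ) * δ) (((k:ℝ) + 1) * δ),
      ENNReal.ofReal (m.meas {ω | t < h ω})
      ≤ ENNReal.ofReal (m.meas {ω | (k:ℝ) * δ < h ω}) *
        volume (Set.Ioc ((k:ℝ) * δ) (((k:ℝ) + 1) * δ)) := by
    refine setLIntegral_le_const'' measurableSet_Ioc (fun t ht => ?_)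
    refine ENNReal.ofReal_le_ofReal (meas_mono m ?_)
    intro ω hω
    exact lt_trans ht.1 hω
  rw [Real.volume_Ioc] at hbound
  have : ((k:ℝ) + 1) * δ - (k:ℝ) * δ = δ := by ring
  rw [this] at hbound
  calc _ ≤ ENNReal.ofReal (m.meas {ω | (k:ℝ) * δ < h ω}) * ENNReal.ofReal δ := hbound
    _ = ENNReal.ofReal (δ * m.meas {ω | (k:ℝ) * δ < h ω}) := by
        rw [← ENNReal.ofReal_mul (m.nonneg _), mul_comm]

lemma sum_le_tail (m : FinAddProb Ω) (h : Ω → ℝ) {δ : ℝ} (hδ : 0 < δ) (n : ℕ) :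
    ∑ k ∈ Finset.range n, ENNReal.ofReal (δ * m.meas {ω | ((k:ℝ) + 1) * δ < h ω})
      ≤ posTail m h := by
  have key : ∀ j : ℕ, ∑ k ∈ Finset.range j,
      ENNReal.ofReal (δ * m.meas {ω | ((k:ℝ) + 1) * δ < h ω})
      ≤ ∫⁻ t in Set.Ioc (0:ℝ) ((j:ℝ) * δ), ENNReal.ofReal (m.meas {ω | t < h ω}) := by
    intro j
    induction j with
    | zero => simp
    | succ n ih =>
      have hsplit : Set.Ioc (0:ℝ) (((n:ℝ) + 1) * δ)
          = Set.Ioc (0:ℝ) ((n:ℝ) * δ) ∪ Set.Ioc ((n:ℝ) * δ) (((n:ℝ) + 1) * δ) := by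
        rw [Set.Ioc_union_Ioc_eq_Ioc (by positivity) (by nlinarith)]
      have hcast : (((n + 1 : ℕ)):ℝ) * δ = ((n:ℝ) + 1) * δ := by push_cast; ring
      rw [hcast, hsplit,
        Measure.restrict_union (Set.Ioc_disjoint_Ioc_of_le le_rfl) measurableSet_Ioc,
        lintegral_add_measure, Finset.sum_range_succ]
      refine add_le_add ih ?_
      have hpiece : ENNReal.ofReal (m.meas {ω | ((n:ℝ) + 1) * δ < h ω}) *
          volume (Set.Ioc ((n:ℝ) * δ) (((n:ℝ) + 1) * δ))
          ≤ ∫⁻ t in Set.Ioc ((n:ℝ) * δ) (((n:ℝ) + 1) * δ),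
            ENNReal.ofReal (m.meas {ω | t < h ω}) := by
        refine const_le_setLIntegral'' measurableSet_Ioc (fun t ht => ?_)
        refine ENNReal.ofReal_le_ofReal (meas_mono m ?_)
        intro ω hω
        exact lt_of_le_of_lt ht.2 hω
      rw [Real.volume_Ioc] at hpiece
      have e : ((n:ℝ) + 1) * δ - (n:ℝ) * δ = δ := by ring
      rw [e] at hpiece
      calc ENNReal.ofReal (δ * m.meas {ω | ((n:ℝ) + 1) * δ < h ω})
          = ENNReal.ofReal (m.meas {ω | ((n:ℝ) + 1) * δ < h ω}) * ENNReal.ofReal δ := by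
            rw [← ENNReal.ofReal_mul (m.nonneg _), mul_comm]
        _ ≤ _ := hpiece
  refine le_trans (key n) ?_
  rw [posTail_eq]
  refine lintegral_mono' (Measure.restrict_mono ?_ le_rfl) le_rfl
  exact fun t ht => ht.1
end M0Aux
namespace M0Aux

open MeasureTheory ENNReal

variable {Ω : Type*}

lemma tail_le_of_partial (m : FinAddProb Ω) (h : Ω → ℝ) {δ C : ℝ} (hδ : 0 < δ)
    (hC : ∀ n : ℕ, (∑ k ∈ Finset.range n, δ * m.meas {ω | ((k:ℝ) + 1) * δ < h ω}) ≤ C) :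
    posTail m h ≤ ENNReal.ofReal (δ + C) := by
  have hC0 : 0 ≤ C := by simpa using hC 0
  refine le_trans (tail_le_tsum m h hδ) ?_
  rw [ENNReal.tsum_eq_iSup_sum]
  refine iSup_le (fun s => ?_)
  obtain ⟨n, hn⟩ := s.exists_nat_subset_range
  have h1 : ∑ k ∈ s, ENNReal.ofReal (δ * m.meas {ω | (k:ℝ) * δ < h ω})
      ≤ ∑ k ∈ Finset.range n, ENNReal.ofReal (δ * m.meas {ω | (k:ℝ) * δ < h ω}) :=
    Finset.sum_le_sum_of_subset hn
  have h2 : ∑ k ∈ Finset.range n, ENNReal.ofReal (δ * m.meas {ω | (k:ℝ) * δ < h ω})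
      = ENNReal.ofReal (∑ k ∈ Finset.range n, δ * m.meas {ω | (k:ℝ) * δ < h ω}) := by
    rw [ENNReal.ofReal_sum_of_nonneg]
    intro k _; exact mul_nonneg hδ.le (m.nonneg _)
  have h3 : (∑ k ∈ Finset.range n, δ * m.meas {ω | (k:ℝ) * δ < h ω}) ≤ δ + C := by
    cases n with
    | zero => simpa using by linarith
    | succ n' =>
      rw [Finset.sum_range_succ']
      have e0 : δ * m.meas {ω | ((0:ℕ):ℝ) * δ < h ω} ≤ δ := by
        have h01 := meas_le_one m {ω | ((0:ℕ):ℝ) * δ < h ω}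
        nlinarith [m.nonneg {ω | ((0:ℕ):ℝ) * δ < h ω}]
      have e1 : ∑ k ∈ Finset.range n', δ * m.meas {ω | (((k+1:ℕ)):ℝ) * δ < h ω} ≤ C := by
        refine le_trans (le_of_eq (Finset.sum_congr rfl fun k _ => ?_)) (hC n')
        push_cast
        ring_nf
      linarith
  calc ∑ k ∈ s, ENNReal.ofReal (δ * m.meas {ω | (k:ℝ) * δ < h ω})
      ≤ _ := h1
    _ = _ := h2
    _ ≤ ENNReal.ofReal (δ + C) := ENNReal.ofReal_le_ofReal h3

lemma stair_all {δ : ℝ} (w : ℝ) {n : ℕ} (hδ : 0 < δ) (hw : (n:ℝ) * δ < w) :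
    (∑ k ∈ Finset.range n, if ((k:ℝ) + 1) * δ < w then (1:ℝ) else 0) = n := by
  rw [Finset.sum_congr rfl (fun k hk => ?_), Finset.sum_const, Finset.card_range,
    nsmul_eq_mul, mul_one]
  rw [if_pos]
  have hk' : (k:ℝ) + 1 ≤ (n:ℝ) := by
    have := Finset.mem_range.mp hk
    exact_mod_cast this
  nlinarith

lemma stair_nonneg {δ : ℝ} (w : ℝ) (hδ : 0 < δ) (n : ℕ) :
    0 ≤ (∑ k ∈ Finset.range n, if ((k:ℝ) + 1) * δ < w then (1:ℝ) else 0) := by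
  refine Finset.sum_nonneg (fun k _ => ?_)
  split <;> norm_num

lemma stair_le {δ : ℝ} (hδ : 0 < δ) (v : ℝ) (K : ℕ) :
    δ * (∑ k ∈ Finset.range K, if ((k:ℝ) + 1) * δ < v then (1:ℝ) else 0) ≤ max v 0 := by
  induction K with
  | zero => simp
  | succ n ih =>
    by_cases hv : ((n:ℝ) + 1) * δ < v
    · have hall : (∑ k ∈ Finset.range (n+1), if ((k:ℝ) + 1) * δ < v then (1:ℝ) else 0)
          = (n+1 : ℕ) := by
        refine stair_all v hδ ?_
        push_cast
        exact hv
      rw [hall]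
      have hnd : (0:ℝ) ≤ ((n:ℝ) + 1) * δ := by positivity
      have hv0 : 0 < v := by nlinarith
      rw [max_eq_left hv0.le]
      push_cast
      nlinarith
    · rw [Finset.sum_range_succ, if_neg hv]
      simpa using ih

lemma stair_ge {δ : ℝ} (hδ : 0 < δ) (w : ℝ) (j : ℕ) :
    min w ((j:ℝ) * δ) - δ
      ≤ δ * (∑ k ∈ Finset.range j, if ((k:ℝ) + 1) * δ < w then (1:ℝ) else 0) := by
  induction j with
  | zero =>
    simp only [Finset.range_zero, Finset.sum_empty, mul_zero, Nat.cast_zero, zero_mul]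
    have : min w 0 ≤ 0 := min_le_right _ _
    linarith
  | succ n ih =>
    by_cases hw1 : (n:ℝ) * δ < w
    · have hall := stair_all w hδ hw1
      rw [Finset.sum_range_succ, hall]
      have hterm : (0:ℝ) ≤ (if ((n:ℝ) + 1) * δ < w then (1:ℝ) else 0) := by
        split <;> norm_num
      push_cast
      have hmin : min w (((n:ℝ) + 1) * δ) ≤ ((n:ℝ) + 1) * δ := min_le_right _ _
      nlinarith [mul_nonneg hδ.le hterm]
    · push_neg at hw1
      have hmin2 : min w ((n:ℝ) * δ) = w := min_eq_left hw1
      rw [hmin2] at ih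
      rw [Finset.sum_range_succ]
      push_cast
      have hmin1 : min w (((n:ℝ) + 1) * δ) = w := by
        refine min_eq_left ?_
        nlinarith
      rw [hmin1]
      have hterm : (0:ℝ) ≤ (if ((n:ℝ) + 1) * δ < w then (1:ℝ) else 0) := by
        split <;> norm_num
      nlinarith [mul_nonneg hδ.le hterm]

end M0Aux
namespace M0Aux

open MeasureTheory ENNReal

variable {Ω : Type*}

section Key

variable [TopologicalSpace Ω] [DiscreteTopology Ω]
variable {R : Rationality Ω} {X : Set (Ω → ℝ)} {π : (Ω → ℝ) → ℝ}
variable {φ : BoundedContinuousFunction Ω ℝ →ₗ[ℝ] ℝ}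
variable (hM : IsMarket R X) (hπ : IsPriceFun0 R X π)
variable (hφ : ∀ b : BoundedContinuousFunction Ω ℝ, φ b ≤ pFun R X π ⇑b)

lemma indB_sum_apply (s : Finset ℕ) (A : ℕ → Set Ω) (ω : Ω) :
    (∑ k ∈ s, indB (A k)) ω = ∑ k ∈ s, (A k).indicator (fun _ => (1:ℝ)) ω := by
  rw [BoundedContinuousFunction.coe_sum, Finset.sum_apply]
  rfl

lemma ind_setOf (P : Ω → Prop) [DecidablePred P] (ω : Ω) :
    Set.indicator {ω | P ω} (fun _ => (1:ℝ)) ω = if P ω then 1 else 0 := by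
  rw [Set.indicator_apply]
  simp only [Set.mem_setOf_eq]

include hM hπ hφ in
lemma sum_meas_le {g : Ω → ℝ} {lam : ℝ} (hlam : 0 < lam) {Xg : Ω → ℝ} (hXg : Xg ∈ X)
    (hge : R.ge (fun ω => lam * Xg ω) (fun ω => |g ω|)) (n : ℕ) :
    ∑ k ∈ Finset.range n, (1:ℝ) * (mOf hM hπ hφ).meas {ω | ((k:ℝ) + 1) * 1 < |g ω|}
      ≤ lam * π Xg := by
  classical
  set A : ℕ → Set Ω := fun k => {ω | ((k:ℝ) + 1) * 1 < |g ω|} with hA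
  set sB : BoundedContinuousFunction Ω ℝ := ∑ k ∈ Finset.range n, indB (A k) with hsB
  have hcoe : ∀ ω, sB ω = ∑ k ∈ Finset.range n,
      (if ((k:ℝ) + 1) * 1 < |g ω| then (1:ℝ) else 0) := by
    intro ω
    rw [hsB, indB_sum_apply]
    refine Finset.sum_congr rfl (fun k _ => ?_)
    rw [hA]
    exact ind_setOf _ ω
  have hpt : ∀ ω, sB ω ≤ |g ω| := by
    intro ω
    rw [hcoe]
    have h1 := stair_le (δ := 1) one_pos (|g ω|) n
    rw [max_eq_left (abs_nonneg _)] at h1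
    linarith
  have hlb : ∀ ω, (0:ℝ) ≤ sB ω := by
    intro ω
    rw [hcoe]
    refine Finset.sum_nonneg (fun k _ => ?_)
    split <;> norm_num
  have hgechain : R.ge (fun ω => lam * Xg ω) (fun ω => sB ω + 0) := by
    have h1 : R.ge (fun ω => |g ω|) (fun ω => sB ω) := R.ge_of_le _ _ hpt
    have h2 := R.trans _ _ _ hge h1
    refine geOfEq R h2 rfl ?_
    funext ω; rw [add_zero]
  have hmem : lam * π Xg - 0 ∈ Sset R X π ⇑sB := ⟨lam, hlam, Xg, hXg, 0, hgechain, rfl⟩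
  have hple : pFun R X π ⇑sB ≤ lam * π Xg - 0 := pFun_le_of_mem hM hπ hlb hmem
  have hphi : φ sB = ∑ k ∈ Finset.range n, (mOf hM hπ hφ).meas (A k) := by
    rw [hsB, map_sum]
    rfl
  have : ∑ k ∈ Finset.range n, (mOf hM hπ hφ).meas (A k) ≤ lam * π Xg := by
    rw [← hphi]
    calc φ sB ≤ pFun R X π ⇑sB := hφ sB
      _ ≤ lam * π Xg - 0 := hple
      _ = lam * π Xg := by ring
  calc ∑ k ∈ Finset.range n, (1:ℝ) * (mOf hM hπ hφ).meas {ω | ((k:ℝ) + 1) * 1 < |g ω|}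
      = ∑ k ∈ Finset.range n, (mOf hM hπ hφ).meas (A k) := by
        refine Finset.sum_congr rfl (fun k _ => ?_)
        rw [one_mul, hA]
    _ ≤ lam * π Xg := this

end Key

end M0Aux
namespace M0Aux

open MeasureTheory ENNReal

variable {Ω : Type*}

section Key2

variable [TopologicalSpace Ω] [DiscreteTopology Ω]
variable {R : Rationality Ω} {X : Set (Ω → ℝ)} {π : (Ω → ℝ) → ℝ}
variable {φ : BoundedContinuousFunction Ω ℝ →ₗ[ℝ] ℝ}
variable (hM : IsMarket R X) (hπ : IsPriceFun0 R X π)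
variable (hφ : ∀ b : BoundedContinuousFunction Ω ℝ, φ b ≤ pFun R X π ⇑b)

include hM hπ hφ in
lemma meas_tail_null {f : Ω → ℝ} {a : ℝ} (hge_a : R.ge f (fun _ => a)) {t : ℝ}
    (hta : -a < t) :
    (mOf hM hπ hφ).meas {ω | t < -f ω} = 0 := by
  classical
  set A := {ω | t < -f ω} with hA
  set c : Ω → ℝ := fun ω => if t < -f ω then (1:ℝ) else 0 with hc
  have hc0 : ∀ ω, 0 ≤ c ω := by
    intro ω; rw [hc]; dsimp only; split <;> norm_num
  have hc1 : ∀ ω, c ω ≤ 1 := by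
    intro ω; rw [hc]; dsimp only; split <;> norm_num
  have s1 := R.affine f (fun _ => a) c 0 hge_a hc0 ⟨1, hc1⟩
  have s1' : R.ge (fun ω => c ω * f ω) (fun ω => c ω * a) := by
    refine geOfEq R s1 ?_ ?_ <;> (funext ω; simp)
  have s2 : R.ge (fun ω => -t * c ω) (fun ω => c ω * f ω) := by
    apply R.ge_of_le
    intro ω
    rw [hc]; dsimp only
    by_cases h : t < -f ω
    · rw [if_pos h]; nlinarith
    · rw [if_neg h]; simp
  have s3 := R.trans _ _ _ s2 s1'
  have s4 := geAdd R s3 (fun ω => t * c ω)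
  have s5 : R.ge (0 : Ω → ℝ) (fun ω => (a + t) * c ω) := by
    refine geOfEq R s4 ?_ ?_
    · funext ω; show -t * c ω + t * c ω = (0 : Ω → ℝ) ω; rw [Pi.zero_apply]; ring
    · funext ω; ring
  have hat : 0 < a + t := by linarith
  have s6 := geSmul R s5 (le_of_lt (inv_pos.mpr hat))
  have s7 : R.ge (0 : Ω → ℝ) c := by
    refine geOfEq R s6 ?_ ?_
    · funext ω; show (a+t)⁻¹ * (0 : Ω → ℝ) ω = (0 : Ω → ℝ) ω; simp
    · funext ω; show (a+t)⁻¹ * ((a + t) * c ω) = c ω; field_simp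
  have hcoe : ⇑(indB A) = c := by
    funext ω; rw [indB_apply, hA, ind_setOf, hc]
  have s8 : R.ge (fun ω => 1 * (0 : Ω → ℝ) ω) (fun ω => (indB A) ω + 0) := by
    refine geOfEq R s7 ?_ ?_
    · funext ω; simp
    · funext ω; rw [show (indB A) ω = c ω from congrFun hcoe ω]; ring
  have hmem : (1 * π (0 : Ω → ℝ) - 0) ∈ Sset R X π ⇑(indB A) :=
    ⟨1, one_pos, 0, hM.zero_mem, 0, s8, rfl⟩
  have hple := pFun_le_of_mem hM hπ (fun ω => indB_nonneg A ω) hmem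
  rw [pi_zero hM hπ] at hple
  have hle : φ (indB A) ≤ 0 := by
    have := hφ (indB A); linarith
  exact le_antisymm hle ((mOf hM hπ hφ).nonneg A)

include hM hπ hφ in
lemma market_partial {f : Ω → ℝ} (hf : f ∈ X) {a : ℝ} (hge_a : R.ge f (fun _ => a))
    {δ : ℝ} (hδ : 0 < δ) {K₁ : ℕ} (hK₁ : -a < (K₁:ℝ) * δ) (K : ℕ) :
    ∑ k ∈ Finset.range K, δ * (mOf hM hπ hφ).meas {ω | ((k:ℝ) + 1) * δ < f ω}
      ≤ π f + δ
        + ∑ k ∈ Finset.range K₁, δ * (mOf hM hπ hφ).meas {ω | ((k:ℝ) + 1) * δ < -f ω} := by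
  classical
  set T := (K₁:ℝ) * δ with hT
  have hT0 : 0 ≤ T := by positivity
  set c : Ω → ℝ := fun ω => if T < -f ω then (1:ℝ) else 0 with hc
  have hc0 : ∀ ω, 0 ≤ c ω := by
    intro ω; rw [hc]; dsimp only; split <;> norm_num
  have hc1 : ∀ ω, c ω ≤ 1 := by
    intro ω; rw [hc]; dsimp only; split <;> norm_num
  have s1 := R.affine f (fun _ => a) c 0 hge_a hc0 ⟨1, hc1⟩
  have s1' : R.ge (fun ω => c ω * f ω) (fun ω => c ω * a) := by
    refine geOfEq R s1 ?_ ?_ <;> (funext ω; simp)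
  have s2 : R.ge (fun ω => -(c ω * a)) (fun ω => -(c ω * f ω)) := by
    have := geAdd R s1' (fun ω => -(c ω * f ω) - c ω * a)
    refine geOfEq R this ?_ ?_ <;> (funext ω; ring)
  have s3 := geAdd R s2 (fun ω => -(T * c ω))
  have e1 : (fun ω => -(c ω * f ω) + -(T * c ω)) = fun ω => max (-f ω - T) 0 := by
    funext ω
    by_cases h : T < -f ω
    · rw [hc]; dsimp only; rw [if_pos h, max_eq_left (by linarith : (0:ℝ) ≤ -f ω - T)]
      ring
    · rw [hc]; dsimp only; rw [if_neg h]
      push_neg at h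
      rw [max_eq_right (by linarith : -f ω - T ≤ (0:ℝ))]
      ring
  have e2 : (fun ω => -(c ω * a) + -(T * c ω)) = fun ω => (-a - T) * c ω := by
    funext ω; ring
  have s4 : R.ge (0 : Ω → ℝ) (fun ω => (-a - T) * c ω) := by
    apply R.ge_of_le
    intro ω
    rw [Pi.zero_apply]
    have h1 : -a - T ≤ 0 := by linarith
    exact mul_nonpos_of_nonpos_of_nonneg h1 (hc0 ω)
  have hg0 : R.ge (0 : Ω → ℝ) (fun ω => max (-f ω - T) 0) :=
    R.trans _ _ _ s4 (geOfEq R s3 e2 e1)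
  -- the staircase element
  set AP : ℕ → Set Ω := fun k => {ω | ((k:ℝ) + 1) * δ < f ω} with hAP
  set AN : ℕ → Set Ω := fun k => {ω | ((k:ℝ) + 1) * δ < -f ω} with hAN
  set bP : BoundedContinuousFunction Ω ℝ := ∑ k ∈ Finset.range K, indB (AP k) with hbP
  set bN : BoundedContinuousFunction Ω ℝ := ∑ k ∈ Finset.range K₁, indB (AN k) with hbN
  set b : BoundedContinuousFunction Ω ℝ := δ • (bP - bN) with hb
  have hbPcoe : ∀ ω, bP ω = ∑ k ∈ Finset.range K,
      (if ((k:ℝ) + 1) * δ < f ω then (1:ℝ) else 0) := by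
    intro ω
    rw [hbP, indB_sum_apply]
    refine Finset.sum_congr rfl (fun k _ => ?_)
    rw [hAP]; exact ind_setOf _ ω
  have hbNcoe : ∀ ω, bN ω = ∑ k ∈ Finset.range K₁,
      (if ((k:ℝ) + 1) * δ < -f ω then (1:ℝ) else 0) := by
    intro ω
    rw [hbN, indB_sum_apply]
    refine Finset.sum_congr rfl (fun k _ => ?_)
    rw [hAN]; exact ind_setOf _ ω
  have hbcoe : ∀ ω, b ω = δ * (bP ω - bN ω) := by
    intro ω; rw [hb]; simp
  have hpt : ∀ ω, b ω ≤ f ω + δ + max (-f ω - T) 0 := by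
    intro ω
    rw [hbcoe ω, hbPcoe ω, hbNcoe ω]
    set P := ∑ k ∈ Finset.range K, (if ((k:ℝ) + 1) * δ < f ω then (1:ℝ) else 0) with hP
    set N := ∑ k ∈ Finset.range K₁, (if ((k:ℝ) + 1) * δ < -f ω then (1:ℝ) else 0) with hN
    have hP1 : δ * P ≤ max (f ω) 0 := stair_le hδ (f ω) K
    have hP0 : 0 ≤ P := stair_nonneg (f ω) hδ K
    have hN1 : min (-f ω) T - δ ≤ δ * N := by
      have := stair_ge hδ (-f ω) K₁
      rwa [← hT] at this
    have hN0 : 0 ≤ N := stair_nonneg (-f ω) hδ K₁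
    have hmax0 : (0:ℝ) ≤ max (-f ω - T) 0 := le_max_right _ _
    rcases le_or_gt 0 (f ω) with h0 | h0
    · rw [max_eq_left h0] at hP1
      nlinarith [mul_nonneg hδ.le hN0]
    · rw [max_eq_right h0.le] at hP1
      rcases le_or_gt (-f ω) T with hcase | hcase
      · rw [min_eq_left hcase] at hN1
        nlinarith [mul_nonneg hδ.le hP0]
      · rw [min_eq_right hcase.le] at hN1
        rw [max_eq_left (by linarith : (0:ℝ) ≤ -f ω - T)]
        nlinarith [mul_nonneg hδ.le hP0]
  have hXw : (fun ω => f ω + δ) ∈ X := hM.add_nonneg_const f hf δ hδ.le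
  have u1 : R.ge (fun ω => f ω + δ + max (-f ω - T) 0) (fun ω => b ω) :=
    R.ge_of_le _ _ hpt
  have u2' := geAdd R hg0 (fun ω => f ω + δ)
  have u2 : R.ge (fun ω => f ω + δ) (fun ω => f ω + δ + max (-f ω - T) 0) := by
    refine geOfEq R u2' ?_ ?_
    · funext ω; show (0 : Ω → ℝ) ω + (f ω + δ) = f ω + δ; rw [Pi.zero_apply]; ring
    · funext ω; ring
  have u3 := R.trans _ _ _ u2 u1
  have u4 : R.ge (fun ω => 1 * (f ω + δ)) (fun ω => b ω + 0) := by
    refine geOfEq R u3 ?_ ?_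
    · funext ω; ring
    · funext ω; ring
  have hmem : (1 * π (fun ω => f ω + δ) - 0) ∈ Sset R X π ⇑b :=
    ⟨1, one_pos, _, hXw, 0, u4, rfl⟩
  have hple := pFun_le_of_mem hM hπ (fun ω => (coe_bound b ω).1) hmem
  have hphi : φ b = δ * ((∑ k ∈ Finset.range K, (mOf hM hπ hφ).meas (AP k))
      - (∑ k ∈ Finset.range K₁, (mOf hM hπ hφ).meas (AN k))) := by
    rw [hb, _root_.map_smul, map_sub, hbP, hbN, _root_.map_sum, _root_.map_sum, smul_eq_mul]
    rfl
  have hπw : π (fun ω => f ω + δ) ≤ π f + δ := pi_add_const hM hπ hf hδ.le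
  have hφb := hφ b
  have hfinal : δ * ((∑ k ∈ Finset.range K, (mOf hM hπ hφ).meas (AP k))
      - (∑ k ∈ Finset.range K₁, (mOf hM hπ hφ).meas (AN k))) ≤ π f + δ := by
    rw [← hphi]
    calc φ b ≤ pFun R X π ⇑b := hφb
      _ ≤ 1 * π (fun ω => f ω + δ) - 0 := hple
      _ = π (fun ω => f ω + δ) := by ring
      _ ≤ π f + δ := hπw
  have eP : ∑ k ∈ Finset.range K, δ * (mOf hM hπ hφ).meas (AP k)
      = δ * ∑ k ∈ Finset.range K, (mOf hM hπ hφ).meas (AP k) := by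
    rw [Finset.mul_sum]
  have eN : ∑ k ∈ Finset.range K₁, δ * (mOf hM hπ hφ).meas (AN k)
      = δ * ∑ k ∈ Finset.range K₁, (mOf hM hπ hφ).meas (AN k) := by
    rw [Finset.mul_sum]
  rw [eP, eN]
  linarith

end Key2

end M0Aux
/-- for a market `(𝒳, ≥_*, π)` with `π ∈ Π₀(𝒳)`, the set `M₀(π)` of
pricing measures is non-empty. -/
theorem M0_nonempty {Ω : Type*} (R : Rationality Ω) (X : Set (Ω → ℝ)) (π : (Ω → ℝ) → ℝ)
    (hM : IsMarket R X) (hπ : IsPriceFun0 R X π) :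
    (M0 R X π).Nonempty := by
  classical
  letI : TopologicalSpace Ω := ⊥
  haveI : DiscreteTopology Ω := ⟨rfl⟩
  obtain ⟨φ, hφ⟩ := M0Aux.exists_phi hM hπ
  refine ⟨M0Aux.mOf hM hπ hφ, ?_, ?_⟩
  · -- `L(𝒳) ⊆ L¹(m)`
    rintro g ⟨lam, hlam, Xg, hXg, hge⟩
    set m := M0Aux.mOf hM hπ hφ with hm
    have habs : posTail m (fun ω => |g ω|) ≤ ENNReal.ofReal (1 + lam * π Xg) := by
      refine M0Aux.tail_le_of_partial m (fun ω => |g ω|) one_pos ?_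
      intro n
      exact M0Aux.sum_meas_le hM hπ hφ hlam hXg hge n
    constructor
    · have h1 : posTail m g ≤ posTail m (fun ω => |g ω|) := by
        refine M0Aux.tail_le_tail m ?_
        intro t _ ω hω
        simp only [Set.mem_setOf_eq] at hω ⊢
        exact lt_of_lt_of_le hω (le_abs_self _)
      exact ne_top_of_le_ne_top ENNReal.ofReal_ne_top (le_trans h1 habs)
    · have h1 : posTail m (fun ω => -g ω) ≤ posTail m (fun ω => |g ω|) := by
        refine M0Aux.tail_le_tail m ?_
        intro t _ ω hω
        simp only [Set.mem_setOf_eq] at hω ⊢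
        exact lt_of_lt_of_le hω (neg_le_abs _)
      exact ne_top_of_le_ne_top ENNReal.ofReal_ne_top (le_trans h1 habs)
  · -- the pricing inequality
    intro f hf
    set m := M0Aux.mOf hM hπ hφ with hm
    obtain ⟨a, hge_a⟩ := hM.bddBelow f hf
    set t₀ := max (-a) 0 with ht₀
    have hTm : posTail m (fun ω => -f ω) ≤ ENNReal.ofReal t₀ := by
      refine M0Aux.tail_le_of_null m _ (le_max_right _ _) ?_
      intro t ht
      exact M0Aux.meas_tail_null hM hπ hφ hge_a (lt_of_le_of_lt (le_max_left _ _) ht)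
    have hTm_ne : posTail m (fun ω => -f ω) ≠ ⊤ :=
      ne_top_of_le_ne_top ENNReal.ofReal_ne_top hTm
    have key : ∀ δ : ℝ, 0 < δ →
        (posTail m f).toReal ≤ π f + 2*δ + (posTail m (fun ω => -f ω)).toReal := by
      intro δ hδ
      set K₁ : ℕ := Nat.ceil (t₀ / δ) + 1 with hK₁def
      have hK₁ : -a < (K₁:ℝ) * δ := by
        have h1 : t₀ / δ ≤ (Nat.ceil (t₀/δ) : ℝ) := Nat.le_ceil _
        have h2 : t₀ ≤ (Nat.ceil (t₀/δ) : ℝ) * δ := by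
          calc t₀ = (t₀/δ) * δ := by field_simp
            _ ≤ _ := mul_le_mul_of_nonneg_right h1 hδ.le
        have h3 : -a ≤ t₀ := le_max_left _ _
        have h4 : (K₁:ℝ) * δ = (Nat.ceil (t₀/δ) : ℝ) * δ + δ := by
          rw [hK₁def]; push_cast; ring
        linarith
      set Sm := ∑ k ∈ Finset.range K₁, δ * m.meas {ω | ((k:ℝ)+1)*δ < -f ω} with hSm
      have hSm0 : 0 ≤ Sm :=
        Finset.sum_nonneg fun k _ => mul_nonneg hδ.le (m.nonneg _)
      have hSle : Sm ≤ (posTail m (fun ω => -f ω)).toReal := by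
        have h1 := M0Aux.sum_le_tail m (fun ω => -f ω) hδ K₁
        have h2 : ∑ k ∈ Finset.range K₁,
            ENNReal.ofReal (δ * m.meas {ω | ((k:ℝ)+1)*δ < -f ω})
            = ENNReal.ofReal Sm := by
          rw [hSm, ENNReal.ofReal_sum_of_nonneg]
          intro k _; exact mul_nonneg hδ.le (m.nonneg _)
        rw [h2] at h1
        have h3 := ENNReal.toReal_mono hTm_ne h1
        rwa [ENNReal.toReal_ofReal hSm0] at h3
      have hC : ∀ K : ℕ, ∑ k ∈ Finset.range K, δ * m.meas {ω | ((k:ℝ)+1)*δ < f ω}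
          ≤ π f + δ + Sm := fun K => M0Aux.market_partial hM hπ hφ hf hge_a hδ hK₁ K
      have hC0 : 0 ≤ π f + δ + Sm := by simpa using hC 0
      have hTp : posTail m f ≤ ENNReal.ofReal (δ + (π f + δ + Sm)) :=
        M0Aux.tail_le_of_partial m f hδ hC
      have h5 := ENNReal.toReal_mono ENNReal.ofReal_ne_top hTp
      rw [ENNReal.toReal_ofReal (by linarith)] at h5
      linarith
    show faIntegral m f ≤ π f
    rw [show faIntegral m f
        = (posTail m f).toReal - (posTail m (fun ω => -f ω)).toReal from rfl]
    refine le_of_forall_pos_le_add ?_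
    intro ε hε
    have := key (ε/2) (half_pos hε)
    linarith
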